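/- Let (Ω, Σ, μ, P, t) be an epistemic model in which the σ-algebra Σ contains only finitely many sets, each t(ω,·) is monotonic (E ⊆ F measurable implies t(ω,E) ≤ t(ω,F)), and for every ω and all measurable E, F, t(ω,E) = 1 and t(ω,F) = 1 imply t(ω, E ∩ F) = 1; assume (↑t(ω)) is measurable for every ω. Then the model satisfies Positive Certainty of Beliefs (t(ω, (↑t(ω))) = 1 for every ω) if and only if for every p ∈ [0,1] and every measurable E, B^p(E) ⊆ B^1(B^p(E)). -/
import Mathlib


open MeasureTheory

/-- An epistemic model over a measurable space `Ω` with prior `μ`. -/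
structure EpiModel (Ω : Type) [MeasurableSpace Ω] (μ : Measure Ω) where
  P : Ω → Set Ω
  t : Ω → Set Ω → ℝ
  prob : IsProbabilityMeasure μ
  P_meas : ∀ ω, MeasurableSet (P ω)
  K_meas : ∀ E : Set Ω, MeasurableSet E → MeasurableSet {ω | P ω ⊆ E}
  t_nonneg : ∀ ω E, 0 ≤ t ω E
  t_le_one : ∀ ω E, t ω E ≤ 1
  t_meas : ∀ E : Set Ω, MeasurableSet E → Measurable fun ω => t ω E
  P_pos : ∀ ω, 0 < μ (P ω)

namespace EpiModel

variable {Ω : Type} [MeasurableSpace Ω] {μ : Measure Ω}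

/-- The `p`-belief operator `B^p`. -/
def B (M : EpiModel Ω μ) (p : ℝ) (E : Set Ω) : Set Ω := {ω | p ≤ M.t ω E}

/-- The qualitative belief operator `K`. -/
def K (M : EpiModel Ω μ) (A : Set Ω) : Set Ω := {ω | M.P ω ⊆ A}

/-- `(↑t(ω))`. -/
def up (M : EpiModel Ω μ) (ω : Ω) : Set Ω :=
  {ω' | ∀ E : Set Ω, MeasurableSet E → M.t ω E ≤ M.t ω' E}

/-- `(↓t(ω))`. -/
def down (M : EpiModel Ω μ) (ω : Ω) : Set Ω :=
  {ω' | ∀ E : Set Ω, MeasurableSet E → M.t ω' E ≤ M.t ω E}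

/-- `[t(ω)] = (↑t(ω)) ∩ (↓t(ω))`. -/
def cl (M : EpiModel Ω μ) (ω : Ω) : Set Ω := M.up ω ∩ M.down ω

/-- Invariance: the prior is the expectation of the posteriors. -/
def Invariance (M : EpiModel Ω μ) : Prop :=
  ∀ E : Set Ω, MeasurableSet E → (μ E).toReal = ∫ ω, M.t ω E ∂μ

/-- Entailment: `t(ω, P(ω)) = 1`. -/
def Entailment (M : EpiModel Ω μ) : Prop := ∀ ω, M.t ω (M.P ω) = 1

/-- Self-Evidence of Beliefs: `P(ω) ⊆ (↑t(ω))`. -/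
def SelfEvidence (M : EpiModel Ω μ) : Prop := ∀ ω, M.P ω ⊆ M.up ω

/-- Each `t(ω,·)` is the restriction of a countably additive probability measure. -/
def AdditiveTypes (M : EpiModel Ω μ) : Prop :=
  ∀ ω, ∃ ν : Measure Ω, IsProbabilityMeasure ν ∧
    ∀ E : Set Ω, MeasurableSet E → M.t ω E = (ν E).toReal

/-- A regular model. -/
def Regular (M : EpiModel Ω μ) : Prop :=
  M.AdditiveTypes ∧ M.Invariance ∧ M.Entailment ∧ M.SelfEvidence

/-- Each type is the Bayes conditional probability given the information set. -/
def Bayes (M : EpiModel Ω μ) : Prop :=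
  ∀ (ω : Ω) (E : Set Ω), MeasurableSet E →
    M.t ω E = (μ (E ∩ M.P ω)).toReal / (μ (M.P ω)).toReal

/-- A discrete environment: countable states, powerset σ-algebra, full-support prior. -/
def Discrete (Ω : Type) [MeasurableSpace Ω] (μ : Measure Ω) : Prop :=
  Countable Ω ∧ (∀ A : Set Ω, MeasurableSet A) ∧ ∀ ω : Ω, 0 < μ {ω}

/-- `{P(ω)}` forms a partition. -/
def Partitional (M : EpiModel Ω μ) : Prop :=
  (∀ ω, ω ∈ M.P ω) ∧ ∀ ω ω', ω' ∈ M.P ω → M.P ω' = M.P ω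

end EpiModel

/-- Positive Certainty of Beliefs iff `B^p(E) ⊆ B^1(B^p(E))`. -/
theorem statement0 {Ω : Type} [MeasurableSpace Ω] {μ : MeasureTheory.Measure Ω}
    (M : EpiModel Ω μ)
    (hfin : {E : Set Ω | MeasurableSet E}.Finite)
    (hmono : ∀ (ω : Ω) (E F : Set Ω), MeasurableSet E → MeasurableSet F → E ⊆ F →
      M.t ω E ≤ M.t ω F)
    (hconj : ∀ (ω : Ω) (E F : Set Ω), MeasurableSet E → MeasurableSet F →
      M.t ω E = 1 → M.t ω F = 1 → M.t ω (E ∩ F) = 1)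
    (hup : ∀ ω, MeasurableSet (M.up ω)) :
    (∀ ω, M.t ω (M.up ω) = 1) ↔
      ∀ p ∈ Set.Icc (0 : ℝ) 1, ∀ E : Set Ω, MeasurableSet E →
        M.B p E ⊆ M.B 1 (M.B p E) := by
  constructor
  · intro hPC p hp E hE ω hω
    have hBm : MeasurableSet (M.B p E) := (M.t_meas E hE) measurableSet_Ici
    have hsub : M.up ω ⊆ M.B p E := fun ω' hω' => le_trans hω (hω' E hE)
    have hle := hmono ω (M.up ω) (M.B p E) (hup ω) hBm hsub
    have h1 := hPC ω
    show (1 : ℝ) ≤ M.t ω (M.B p E)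
    linarith
  · intro h ω
    set F : Set (Set Ω) := (fun E => M.B (M.t ω E) E) '' {E | MeasurableSet E} with hF
    have hFfin : F.Finite := hfin.image _
    have hFprop : ∀ A ∈ F, MeasurableSet A ∧ M.t ω A = 1 := by
      rintro A ⟨E, hE, rfl⟩
      have hBm : MeasurableSet (M.B (M.t ω E) E) := (M.t_meas E hE) measurableSet_Ici
      refine ⟨hBm, ?_⟩
      have hmem : ω ∈ M.B (M.t ω E) E := le_refl (M.t ω E)
      have h1 := h (M.t ω E) ⟨M.t_nonneg ω E, M.t_le_one ω E⟩ E hE hmem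
      exact le_antisymm (M.t_le_one _ _) h1
    classical
    have key : ∀ S : Finset (Set Ω),
        (∀ B ∈ S, MeasurableSet B ∧ M.t ω B = 1) →
        ∀ A, MeasurableSet A → M.t ω A = 1 →
        M.t ω (A ∩ ⋂₀ (S : Set (Set Ω))) = 1 := by
      intro S
      induction S using Finset.induction_on with
      | empty => intro _ A hA h1; simpa using h1
      | @insert B S hBnotin IH =>
        intro hall A hA h1
        have hB := hall B (Finset.mem_insert_self _ _)
        have heq : A ∩ ⋂₀ (↑(insert B S) : Set (Set Ω)) = (A ∩ B) ∩ ⋂₀ (S : Set (Set Ω)) := by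
          rw [Finset.coe_insert, Set.sInter_insert, Set.inter_assoc]
        rw [heq]
        exact IH (fun C hC => hall C (Finset.mem_insert_of_mem hC))
          (A ∩ B) (hA.inter hB.1) (hconj ω A B hA hB.1 h1 hB.2)
    have hA0 : M.B (M.t ω Set.univ) Set.univ ∈ F :=
      ⟨Set.univ, MeasurableSet.univ, rfl⟩
    obtain ⟨hA0m, hA0t⟩ := hFprop _ hA0
    have hFS : (hFfin.toFinset : Set (Set Ω)) = F := hFfin.coe_toFinset
    have hmain := key hFfin.toFinset
      (fun C hC => hFprop C (by rwa [hFfin.mem_toFinset] at hC))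
      _ hA0m hA0t
    have hupeq : M.up ω = M.B (M.t ω Set.univ) Set.univ ∩ ⋂₀ F := by
      ext ω'
      constructor
      · rintro hω'
        refine ⟨hω' Set.univ MeasurableSet.univ, ?_⟩
        rintro A ⟨E, hE, rfl⟩
        exact hω' E hE
      · rintro ⟨_, h2⟩ E hE
        exact h2 _ ⟨E, hE, rfl⟩
    rw [hupeq, ← hFS]
    exact hmain
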